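/- Let d ≥ 1, N ≥ 1, and let ρ₀,…,ρ_N be Borel probability measures on ℝ^d with finite second moments. If γ̂ minimizes Σ_{i=0}^{N−1} ∫ c(x_i, x_{i+1}, v_i, v_{i+1}) dγ over all γ ∈ Γ(ρ₀,…,ρ_N), then its position marginal π̂ = (X₀,…,X_N)_#γ̂ minimizes ∫ 𝒞(x₀,…,x_N) dπ over all π ∈ Π(ρ₀,…,ρ_N). -/

import Mathlib

open MeasureTheory

noncomputable section

/-- The cost `c(x, x', v, v') = 12‖x'−x−v‖² − 12⟨x'−x−v, v'−v⟩ + 4‖v'−v‖²`. -/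
def splineCost {d : ℕ} (x x' v v' : EuclideanSpace ℝ (Fin d)) : ℝ :=
  12 * ‖x' - x - v‖ ^ 2 - 12 * (inner ℝ (x' - x - v) (v' - v) : ℝ) + 4 * ‖v' - v‖ ^ 2

/-- `𝒞(x₀,…,x_N)`: the infimum of `∫₀^N ‖X''‖²` over all C² curves `X` with
`X(i) = x i` for every `i = 0, …, N`. -/
def multiCost {d : ℕ} (N : ℕ) (x : Fin (N + 1) → EuclideanSpace ℝ (Fin d)) : ℝ :=
  sInf { y : ℝ | ∃ X : ℝ → EuclideanSpace ℝ (Fin d), ContDiff ℝ 2 X ∧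
      (∀ i : Fin (N + 1), X ((i : ℕ) : ℝ) = x i) ∧
      y = ∫ t in (0:ℝ)..(N:ℝ), ‖deriv (deriv X) t‖ ^ 2 }

namespace SplineProof

variable {d : ℕ}

local notation "E" => EuclideanSpace ℝ (Fin d)

/-! ### Pointwise algebraic identities -/

def PP (x x' v v' : E) : E := (-12:ℝ)•(x'-x-v) + (4:ℝ)•(v'-v)
def RR (x x' v v' : E) : E := (-12:ℝ)•(x'-x-v) + (8:ℝ)•(v'-v)
def AA (x x' v v' : E) : E := (6:ℝ)•(x'-x) - (4:ℝ)•v - (2:ℝ)•v'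
def BB (x x' v v' : E) : E := (-6:ℝ)•(x'-x) + (2:ℝ)•v + (4:ℝ)•v'

lemma I2 (a b : E) : splineCost 0 0 a b = 3*‖a+b‖^2 + ‖b-a‖^2 := by
  simp only [splineCost, ← real_inner_self_eq_norm_sq, inner_sub_left, inner_sub_right,
    inner_add_left, inner_add_right, inner_zero_left, inner_zero_right, zero_sub, inner_neg_left,
    inner_neg_right, real_inner_comm a b]
  ring

lemma I1 (x x' v v' a b : E) :
    splineCost x x' (v+a) (v'+b) = splineCost x x' v v'
      + (inner ℝ (PP x x' v v') a : ℝ) + (inner ℝ (RR x x' v v') b : ℝ) + splineCost 0 0 a b := by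
  simp only [splineCost, PP, RR, ← real_inner_self_eq_norm_sq, inner_sub_left, inner_sub_right,
    inner_add_left, inner_add_right, inner_zero_left, inner_zero_right, zero_sub, inner_neg_left,
    inner_neg_right, real_inner_smul_left, real_inner_smul_right]
  simp only [real_inner_comm]
  ring

lemma splineCost00_nonneg (a b : E) : 0 ≤ splineCost 0 0 a b := by
  rw [I2]; positivity

lemma splineCost00_eq_zero {a b : E} (h : splineCost 0 0 a b = 0) : a = 0 ∧ b = 0 := by
  rw [I2] at h
  have h1 : ‖a + b‖ ^ 2 = 0 ∧ ‖b - a‖ ^ 2 = 0 := by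
    constructor <;> nlinarith [sq_nonneg ‖a+b‖, sq_nonneg ‖b-a‖]
  have h2 : a + b = 0 := by simpa [pow_eq_zero_iff] using h1.1
  have h3 : b - a = 0 := by simpa [pow_eq_zero_iff] using h1.2
  refine ⟨?_, ?_⟩
  · have ha : a = (2:ℝ)⁻¹ • ((a+b) - (b-a)) := by module
    rw [ha, h2, h3]; simp
  · have hb : b = (2:ℝ)⁻¹ • ((a+b) + (b-a)) := by module
    rw [hb, h2, h3]; simp

lemma splineCost00_double (a b : E) : splineCost 0 0 (a+a) (b+b) = 4 * splineCost 0 0 a b := by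
  rw [I2, I2, show a+a+(b+b) = (2:ℝ)•(a+b) by module, show b+b-(a+a) = (2:ℝ)•(b-a) by module,
    norm_smul, norm_smul]
  simp [mul_pow]
  ring

/-- Energy of the Hermite cubic. -/
lemma I3 (x x' v v' : E) :
    ‖AA x x' v v'‖^2 + (inner ℝ (AA x x' v v') (BB x x' v v' - AA x x' v v') : ℝ)
      + ‖BB x x' v v' - AA x x' v v'‖^2/3 = splineCost x x' v v' := by
  simp only [splineCost, AA, BB, ← real_inner_self_eq_norm_sq, inner_sub_left, inner_sub_right,
    inner_add_left, inner_add_right, real_inner_smul_left, real_inner_smul_right]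
  simp only [real_inner_comm]
  ring

/-- The algebraic identity underlying the one-interval lower bound. -/
lemma I4 (x x' v v' : E) :
    splineCost x x' v v'
      = 2*(((inner ℝ (AA x x' v v' + (BB x x' v v' - AA x x' v v')) v' : ℝ)
            - (inner ℝ (BB x x' v v' - AA x x' v v') x' : ℝ))
          - ((inner ℝ (AA x x' v v') v : ℝ) - (inner ℝ (BB x x' v v' - AA x x' v v') x : ℝ)))
        - (‖AA x x' v v'‖^2 + (inner ℝ (AA x x' v v') (BB x x' v v' - AA x x' v v') : ℝ)
            + ‖BB x x' v v' - AA x x' v v'‖^2/3) := by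
  simp only [splineCost, AA, BB, ← real_inner_self_eq_norm_sq, inner_sub_left, inner_sub_right,
    inner_add_left, inner_add_right, real_inner_smul_left, real_inner_smul_right]
  simp only [real_inner_comm]
  ring

lemma I5a (x x' v v' : E) : AA x x' v v' + BB x x' v v' = (2:ℝ)•v' - (2:ℝ)•v := by
  simp only [AA, BB]; module

lemma I5b (x x' v v' : E) :
    (3:ℝ)⁻¹ • AA x x' v v' + (6:ℝ)⁻¹ • BB x x' v v' = (x' - x) - v := by
  simp only [AA, BB]; module

lemma PP_eq (x x' v v' : E) : PP x x' v v' = (-2:ℝ) • AA x x' v v' := by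
  simp only [PP, AA]; module

lemma RR_eq (x x' v v' : E) : RR x x' v v' = (2:ℝ) • BB x x' v v' := by
  simp only [RR, BB]; module

/-! ### The discrete problem: sums, gradient, minimizer -/

variable {N : ℕ}

/-- The total discrete cost. -/
def SS (N : ℕ) (x v : Fin (N+1) → E) : ℝ :=
  ∑ i : Fin N, splineCost (x i.castSucc) (x i.succ) (v i.castSucc) (v i.succ)

/-- The gradient (in `v`) of `SS`. -/
def gd (N : ℕ) (x v : Fin (N+1) → E) (j : Fin (N+1)) : E :=
  ∑ i : Fin N,
    ((if j = i.castSucc then PP (x i.castSucc) (x i.succ) (v i.castSucc) (v i.succ) else 0)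
   + (if j = i.succ then RR (x i.castSucc) (x i.succ) (v i.castSucc) (v i.succ) else 0))

lemma sum_ite_inner {n : ℕ} (η : Fin n → E) (a : Fin n) (P : E) :
    ∑ j : Fin n, (inner ℝ (if j = a then P else 0) (η j) : ℝ) = (inner ℝ P (η a) : ℝ) := by
  rw [Finset.sum_eq_single a]
  · simp
  · intro b _ hb; simp [hb]
  · simp

lemma SS_expand (x v η : Fin (N+1) → E) :
    SS N x (v + η) = SS N x v + (∑ j : Fin (N+1), (inner ℝ (gd N x v j) (η j) : ℝ))
      + SS N 0 η := by
  have key : ∑ j : Fin (N+1), (inner ℝ (gd N x v j) (η j) : ℝ)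
      = ∑ i : Fin N,
        ((inner ℝ (PP (x i.castSucc) (x i.succ) (v i.castSucc) (v i.succ)) (η i.castSucc) : ℝ)
        + (inner ℝ (RR (x i.castSucc) (x i.succ) (v i.castSucc) (v i.succ)) (η i.succ) : ℝ)) := by
    simp only [gd, sum_inner, inner_add_left]
    rw [Finset.sum_comm]
    refine Finset.sum_congr rfl fun i _ => ?_
    rw [Finset.sum_add_distrib, sum_ite_inner, sum_ite_inner]
  rw [key, SS, SS, SS]
  simp only [Pi.add_apply, Pi.zero_apply, I1]
  rw [← Finset.sum_add_distrib, ← Finset.sum_add_distrib]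
  congr 1
  ext i
  ring

lemma SS0_nonneg (η : Fin (N+1) → E) : 0 ≤ SS N 0 η :=
  Finset.sum_nonneg fun i _ => by
    simpa using splineCost00_nonneg (η i.castSucc) (η i.succ)

lemma gd_split (x v : Fin (N+1) → E) (j : Fin (N+1)) :
    gd N x v j = gd N x 0 j + gd N 0 v j := by
  simp only [gd, Pi.zero_apply, ← Finset.sum_add_distrib]
  refine Finset.sum_congr rfl fun i _ => ?_
  have hP : PP (x i.castSucc) (x i.succ) (v i.castSucc) (v i.succ)
      = PP (x i.castSucc) (x i.succ) 0 0 + PP 0 0 (v i.castSucc) (v i.succ) := by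
    simp only [PP]; module
  have hR : RR (x i.castSucc) (x i.succ) (v i.castSucc) (v i.succ)
      = RR (x i.castSucc) (x i.succ) 0 0 + RR 0 0 (v i.castSucc) (v i.succ) := by
    simp only [RR]; module
  split_ifs <;> simp [hP, hR] <;> abel

lemma gd0_add (v w : Fin (N+1) → E) :
    gd N 0 (v + w) = gd N 0 v + gd N 0 w := by
  funext j
  simp only [gd, Pi.zero_apply, Pi.add_apply, ← Finset.sum_add_distrib]
  refine Finset.sum_congr rfl fun i _ => ?_
  have hP : PP (0:E) 0 (v i.castSucc + w i.castSucc) (v i.succ + w i.succ)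
      = PP 0 0 (v i.castSucc) (v i.succ) + PP 0 0 (w i.castSucc) (w i.succ) := by
    simp only [PP]; module
  have hR : RR (0:E) 0 (v i.castSucc + w i.castSucc) (v i.succ + w i.succ)
      = RR 0 0 (v i.castSucc) (v i.succ) + RR 0 0 (w i.castSucc) (w i.succ) := by
    simp only [RR]; module
  split_ifs <;> simp [hP, hR] <;> abel

lemma gd0_smul (c : ℝ) (v : Fin (N+1) → E) :
    gd N 0 (c • v) = c • gd N 0 v := by
  funext j
  simp only [gd, Pi.smul_apply, Pi.zero_apply, Finset.smul_sum]
  refine Finset.sum_congr rfl fun i _ => ?_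
  have hP : PP (0:E) 0 (c • v i.castSucc) (c • v i.succ)
      = c • PP 0 0 (v i.castSucc) (v i.succ) := by simp only [PP]; module
  have hR : RR (0:E) 0 (c • v i.castSucc) (c • v i.succ)
      = c • RR 0 0 (v i.castSucc) (v i.succ) := by simp only [RR]; module
  split_ifs <;> simp [hP, hR]

/-- The linear map `v ↦ ∇_v SS(0, v)`. -/
def Amap : (Fin (N+1) → E) →ₗ[ℝ] (Fin (N+1) → E) where
  toFun v := gd N 0 v
  map_add' := gd0_add
  map_smul' := gd0_smul

lemma SS0_eq_zero {η : Fin (N+1) → E} (hN : N ≠ 0) (h : SS N 0 η = 0) : η = 0 := by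
  have hall : ∀ i : Fin N, splineCost (0:E) 0 (η i.castSucc) (η i.succ) = 0 := by
    have := (Finset.sum_eq_zero_iff_of_nonneg
      (f := fun i : Fin N => splineCost (0:E) 0 (η i.castSucc) (η i.succ))
      (s := Finset.univ) (fun i _ => splineCost00_nonneg _ _)).mp
    intro i
    exact this (by simpa [SS] using h) i (Finset.mem_univ i)
  funext j
  rcases lt_or_ge (j : ℕ) N with hj | hj
  · have := (splineCost00_eq_zero (hall ⟨(j:ℕ), hj⟩)).1
    convert this using 2
    · exact Fin.ext rfl
    · rfl
  · have hjN : (j : ℕ) = N := le_antisymm (Nat.lt_succ_iff.mp j.isLt) hj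
    have hN1 : N - 1 < N := Nat.sub_lt (Nat.pos_of_ne_zero hN) one_pos
    have := (splineCost00_eq_zero (hall ⟨N-1, hN1⟩)).2
    convert this using 2
    exact Fin.ext (by simp [hjN]; omega)
    rfl

lemma Amap_inj (hN : N ≠ 0) : Function.Injective (Amap (d := d) (N := N)) := by
  suffices h : ∀ v, Amap (d := d) (N := N) v = 0 → v = 0 by
    intro a b hab
    have h0 : Amap (d := d) (N := N) (a - b) = 0 := by rw [map_sub, hab, sub_self]
    exact sub_eq_zero.mp (h _ h0)
  intro v hv
  have hv' : ∀ j, gd N 0 v j = 0 := fun j => congrFun hv j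
  have h1 := SS_expand (N := N) 0 v v
  simp only [hv', inner_zero_left, Finset.sum_const_zero, add_zero] at h1
  have h2 : SS N 0 (v + v) = 4 * SS N 0 v := by
    rw [SS, SS, Finset.mul_sum]
    exact Finset.sum_congr rfl fun i _ => by
      simpa using splineCost00_double (v i.castSucc) (v i.succ)
  have h3 : SS N 0 v = 0 := by
    have := h1
    rw [h2] at this
    linarith
  exact SS0_eq_zero hN h3

lemma Amap_bij (hN : N ≠ 0) : Function.Bijective (Amap (d := d) (N := N)) :=
  ⟨Amap_inj hN, (LinearMap.injective_iff_surjective).mp (Amap_inj hN)⟩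

/-- The linear equivalence induced by `Amap`. -/
def Veq (hN : N ≠ 0) : (Fin (N+1) → E) ≃ₗ[ℝ] (Fin (N+1) → E) :=
  LinearEquiv.ofBijective _ (Amap_bij (d := d) hN)

/-- The optimal velocity profile for positions `x`. -/
def Vopt (hN : N ≠ 0) (x : Fin (N+1) → E) : Fin (N+1) → E :=
  (Veq (d := d) hN).symm (-(gd N x 0))

lemma gd_Vopt (hN : N ≠ 0) (x : Fin (N+1) → E) (j : Fin (N+1)) :
    gd N x (Vopt hN x) j = 0 := by
  have h : gd N 0 (Vopt hN x) = -(gd N x 0) := by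
    have := (Veq (d := d) hN).apply_symm_apply (-(gd N x 0))
    simpa [Veq, Vopt, LinearEquiv.ofBijective_apply, Amap] using this
  rw [gd_split, congrFun h j]
  simp

lemma SS_min (hN : N ≠ 0) (x v : Fin (N+1) → E) :
    SS N x (Vopt hN x) ≤ SS N x v := by
  have h := SS_expand (N := N) x (Vopt hN x) (v - Vopt hN x)
  simp only [gd_Vopt, inner_zero_left, Finset.sum_const_zero, add_zero,
    add_sub_cancel] at h
  have := SS0_nonneg (N := N) (v - Vopt hN x)
  linarith

lemma cont_splineCost : Continuous fun p : (E × E) × E × E =>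
    splineCost p.1.1 p.1.2 p.2.1 p.2.2 := by
  have h1 : Continuous fun p : (E × E) × E × E => p.1.2 - p.1.1 - p.2.1 := by fun_prop
  have h2 : Continuous fun p : (E × E) × E × E => p.2.2 - p.2.1 := by fun_prop
  unfold splineCost
  exact ((continuous_const.mul (h1.norm.pow 2)).sub
    (continuous_const.mul (h1.inner h2))).add (continuous_const.mul (h2.norm.pow 2))

lemma cont_SS : Continuous fun p : (Fin (N+1) → E) × (Fin (N+1) → E) => SS N p.1 p.2 := by
  unfold SS splineCost
  apply continuous_finset_sum
  intro i _
  have h1 : Continuous fun p : (Fin (N+1) → E) × (Fin (N+1) → E) =>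
      p.1 i.succ - p.1 i.castSucc - p.2 i.castSucc := by fun_prop
  have h2 : Continuous fun p : (Fin (N+1) → E) × (Fin (N+1) → E) =>
      p.2 i.succ - p.2 i.castSucc := by fun_prop
  exact ((continuous_const.mul (h1.norm.pow 2)).sub
    (continuous_const.mul (h1.inner h2))).add (continuous_const.mul (h2.norm.pow 2))

lemma cont_ite {α : Type*} [TopologicalSpace α] {c : Prop} [Decidable c] {f : α → E}
    (hf : Continuous f) : Continuous fun x => if c then f x else (0:E) := by
  by_cases h : c
  · simpa [h] using hf
  · simpa [h] using continuous_const

lemma cont_gd0 : Continuous fun x : Fin (N+1) → E => gd N x 0 := by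
  apply continuous_pi
  intro j
  unfold gd
  apply continuous_finset_sum
  intro i _
  refine Continuous.add (cont_ite ?_) (cont_ite ?_)
  · unfold PP; fun_prop
  · unfold RR; fun_prop

lemma cont_Vopt (hN : N ≠ 0) : Continuous (Vopt (d := d) hN) := by
  have h1 : Continuous ((Veq (d := d) (N := N) hN).symm.toLinearMap) :=
    LinearMap.continuous_of_finiteDimensional _
  exact h1.comp (cont_gd0.neg)

/-! ### One-interval lower bound -/

lemma contDiff_one_deriv {X : ℝ → E} (hX : ContDiff ℝ 2 X) : ContDiff ℝ 1 (deriv X) := by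
  have hX' : ContDiff ℝ (1+1 : ℕ) X := by exact_mod_cast hX
  exact ((contDiff_succ_iff_deriv (n := 1)).mp (by exact_mod_cast hX')).2.2

lemma interval_lb {X : ℝ → E} (hX : ContDiff ℝ 2 X) (k : ℝ) :
    splineCost (X k) (X (k+1)) (deriv X k) (deriv X (k+1))
      ≤ ∫ t in k..(k+1), ‖deriv (deriv X) t‖^2 := by
  have hdiff : Differentiable ℝ X := hX.differentiable (by norm_num)
  have h21 : ContDiff ℝ 1 (deriv X) := contDiff_one_deriv hX
  have hdd : Differentiable ℝ (deriv X) := h21.differentiable one_ne_zero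
  have hcont2 : Continuous (deriv (deriv X)) := (contDiff_one_iff_deriv.mp h21).2
  set x := X k with hx
  set x' := X (k+1) with hx'
  set v := deriv X k with hv
  set v' := deriv X (k+1) with hv'
  set a := AA x x' v v' with ha
  set b := BB x x' v v' - AA x x' v v' with hb
  set L : ℝ → E := fun t => a + (t - k) • b with hLdef
  have hLd : ∀ t, HasDerivAt L b t := fun t => by
    simpa [hLdef] using (((hasDerivAt_id t).sub_const k).smul_const b).const_add a
  have hLc : Continuous L := by
    rw [hLdef]; fun_prop
  have hφ : ∀ t, HasDerivAt (fun t => (inner ℝ (L t) (deriv X t) : ℝ) - (inner ℝ b (X t) : ℝ))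
      ((inner ℝ (L t) (deriv (deriv X) t) : ℝ)) t := fun t => by
    have h1 := (hLd t).inner ℝ ((hdd t).hasDerivAt)
    have h2 := (hasDerivAt_const t b).inner ℝ ((hdiff t).hasDerivAt)
    refine (h1.sub h2).congr_deriv ?_
    simp [real_inner_comm]
  have hIc : Continuous fun t => (inner ℝ (L t) (deriv (deriv X) t) : ℝ) := hLc.inner hcont2
  have hInt : ∫ t in k..k+1, (inner ℝ (L t) (deriv (deriv X) t) : ℝ)
      = ((inner ℝ (L (k+1)) v' : ℝ) - (inner ℝ b x' : ℝ))
        - ((inner ℝ (L k) v : ℝ) - (inner ℝ b x : ℝ)) := by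
    rw [intervalIntegral.integral_eq_sub_of_hasDerivAt (fun t _ => hφ t)
      (hIc.intervalIntegrable _ _)]
  have hL1 : L (k+1) = a + b := by simp [hLdef]
  have hLk : L k = a := by simp [hLdef]
  have hψ : ∀ t, HasDerivAt
      (fun t => (t-k)*‖a‖^2 + (t-k)^2*(inner ℝ a b : ℝ) + (t-k)^3*(‖b‖^2/3))
      (‖L t‖^2) t := fun t => by
    have hid : HasDerivAt (fun t : ℝ => t - k) 1 t := (hasDerivAt_id t).sub_const k
    have h1 : HasDerivAt (fun t : ℝ => (t-k)*‖a‖^2) (‖a‖^2) t := by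
      simpa using hid.mul_const (‖a‖^2)
    have h2 : HasDerivAt (fun t : ℝ => (t-k)^2*(inner ℝ a b : ℝ))
        (2*(t-k)*(inner ℝ a b : ℝ)) t := by
      have := (hid.pow 2).mul_const (inner ℝ a b : ℝ)
      simpa [mul_comm] using this
    have h3 : HasDerivAt (fun t : ℝ => (t-k)^3*(‖b‖^2/3)) (3*(t-k)^2*(‖b‖^2/3)) t := by
      have := (hid.pow 3).mul_const (‖b‖^2/3)
      simpa [mul_comm] using this
    have h := (h1.add h2).add h3
    refine h.congr_deriv ?_
    rw [hLdef]
    rw [norm_add_sq_real, inner_smul_right, norm_smul]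
    simp only [mul_pow, sq_abs, Real.norm_eq_abs]
    ring
  have hEL : ∫ t in k..k+1, ‖L t‖^2 = ‖a‖^2 + (inner ℝ a b : ℝ) + ‖b‖^2/3 := by
    rw [intervalIntegral.integral_eq_sub_of_hasDerivAt (fun t _ => hψ t)
      ((hLc.norm.pow 2).intervalIntegrable _ _)]
    ring
  have hpt : ∀ t ∈ Set.Icc k (k+1),
      2*(inner ℝ (L t) (deriv (deriv X) t) : ℝ) - ‖L t‖^2 ≤ ‖deriv (deriv X) t‖^2 := by
    intro t _
    nlinarith [sq_nonneg ‖deriv (deriv X) t - L t‖,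
      norm_sub_sq_real (deriv (deriv X) t) (L t),
      real_inner_comm (deriv (deriv X) t) (L t)]
  have hmono := intervalIntegral.integral_mono_on (μ := volume) (by linarith)
    ((((continuous_const.mul hIc)).sub (hLc.norm.pow 2)).intervalIntegrable _ _)
    ((hcont2.norm.pow 2).intervalIntegrable _ _) hpt
  simp only [Pi.sub_apply, Pi.mul_apply, Pi.pow_apply] at hmono
  rw [intervalIntegral.integral_sub (f := fun t => 2 * (inner ℝ (L t) (deriv (deriv X) t) : ℝ))
    (g := fun t => ‖L t‖^2) ((continuous_const.mul hIc).intervalIntegrable _ _)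
    ((hLc.norm.pow 2).intervalIntegrable _ _), intervalIntegral.integral_const_mul,
    hInt, hEL] at hmono
  calc splineCost x x' v v'
      = 2*(((inner ℝ (L (k+1)) v' : ℝ) - (inner ℝ b x' : ℝ))
          - ((inner ℝ (L k) v : ℝ) - (inner ℝ b x : ℝ)))
        - (‖a‖^2 + (inner ℝ a b : ℝ) + ‖b‖^2/3) := by
        rw [hL1, hLk, ha, hb]; exact I4 x x' v v'
    _ ≤ ∫ t in k..(k+1), ‖deriv (deriv X) t‖^2 := hmono

lemma lb_total (hN : N ≠ 0) (x : Fin (N+1) → E) {X : ℝ → E} (hX : ContDiff ℝ 2 X)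
    (hint : ∀ i : Fin (N+1), X ((i:ℕ):ℝ) = x i) :
    SS N x (Vopt hN x) ≤ ∫ t in (0:ℝ)..(N:ℝ), ‖deriv (deriv X) t‖^2 := by
  have hcont2 : Continuous (deriv (deriv X)) :=
    (contDiff_one_iff_deriv.mp (contDiff_one_deriv hX)).2
  have key : ∀ i : Fin N,
      splineCost (x i.castSucc) (x i.succ)
        (deriv X ((i.castSucc:ℕ):ℝ)) (deriv X ((i.succ:ℕ):ℝ))
      ≤ ∫ t in ((i:ℕ):ℝ)..(((i:ℕ):ℝ)+1), ‖deriv (deriv X) t‖^2 := by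
    intro i
    have h1 : ((i.castSucc:ℕ):ℝ) = ((i:ℕ):ℝ) := by norm_num
    have h2 : ((i.succ:ℕ):ℝ) = ((i:ℕ):ℝ)+1 := by push_cast [Fin.val_succ]; ring
    rw [← hint i.castSucc, ← hint i.succ, h1, h2]
    exact interval_lb hX ((i:ℕ):ℝ)
  calc SS N x (Vopt hN x)
      ≤ SS N x (fun j => deriv X ((j:ℕ):ℝ)) := SS_min hN x _
    _ ≤ ∑ i : Fin N, ∫ t in ((i:ℕ):ℝ)..(((i:ℕ):ℝ)+1), ‖deriv (deriv X) t‖^2 :=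
        Finset.sum_le_sum (fun i _ => key i)
    _ = ∑ k ∈ Finset.range N, ∫ t in ((k:ℕ):ℝ)..(((k:ℕ):ℝ)+1), ‖deriv (deriv X) t‖^2 :=
        Fin.sum_univ_eq_sum_range
          (fun k : ℕ => ∫ t in ((k:ℕ):ℝ)..(((k:ℕ):ℝ)+1), ‖deriv (deriv X) t‖^2) N
    _ = ∫ t in (0:ℝ)..(N:ℝ), ‖deriv (deriv X) t‖^2 := by
        have := intervalIntegral.sum_integral_adjacent_intervals
          (μ := volume) (a := fun k : ℕ => (k:ℝ)) (n := N)
          (fun k _ => (hcont2.norm.pow 2).intervalIntegrable _ _)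
        push_cast at this ⊢
        convert this using 1
        all_goals rfl

/-! ### The C² natural cubic spline -/

/-- Piecewise-linear interpolant of the knot values `w`. -/
def Gf (N : ℕ) (w : ℕ → E) (t : ℝ) : E :=
  w 0 + ∑ i ∈ Finset.range N, (max 0 (min 1 (t - i))) • (w (i+1) - w i)

lemma cont_Gf (w : ℕ → E) : Continuous (Gf N w) := by
  apply Continuous.add continuous_const
  apply continuous_finset_sum
  intro i _
  exact (continuous_const.max
    (continuous_const.min (continuous_id.sub continuous_const))).smul continuous_const

lemma Gf_on {w : ℕ → E} {k : ℕ} (hk : k < N) {t : ℝ}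
    (ht : t ∈ Set.Icc (k:ℝ) ((k:ℝ)+1)) :
    Gf N w t = w k + (t - k) • (w (k+1) - w k) := by
  obtain ⟨ht0, ht1⟩ := ht
  rw [Gf, ← Finset.sum_subset (Finset.range_subset_range.mpr hk)]
  · rw [Finset.sum_range_succ]
    have h1 : ∀ i ∈ Finset.range k,
        (max 0 (min 1 (t - i))) • (w (i+1) - w i) = w (i+1) - w i := by
      intro i hi
      have hi' : (i:ℝ) ≤ (k:ℝ) - 1 := by
        have := Finset.mem_range.mp hi
        have : (i:ℝ) + 1 ≤ (k:ℝ) := by exact_mod_cast this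
        linarith
      have : min 1 (t - i) = 1 := min_eq_left (by linarith)
      rw [this, max_eq_right zero_le_one, one_smul]
    rw [Finset.sum_congr rfl h1, Finset.sum_range_sub (fun i => w i)]
    have h2 : min 1 (t - k) = t - k := min_eq_right (by linarith)
    have h3 : max 0 (t - k) = t - k := max_eq_right (by linarith)
    rw [h2, h3]
    abel
  · intro i hi hni
    have hii : k + 1 ≤ i := by simpa [Finset.mem_range] using hni
    have : (k:ℝ) + 1 ≤ (i:ℝ) := by exact_mod_cast hii
    have hmin : min 1 (t - i) ≤ 0 := min_le_of_right_le (by linarith)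
    have : max 0 (min 1 (t - i)) = 0 := max_eq_left (by linarith)
    rw [this, zero_smul]

/-- The spline curve: double primitive of `Gf`. -/
def Xf (N : ℕ) (w : ℕ → E) (x0 v0 : E) (t : ℝ) : E :=
  x0 + t • v0 + ∫ s in (0:ℝ)..t, (∫ u in (0:ℝ)..s, Gf N w u)

section Xf

variable {w : ℕ → E} {x0 v0 : E}

lemma hF1 (w : ℕ → E) (t : ℝ) :
    HasDerivAt (fun s => ∫ u in (0:ℝ)..s, Gf N w u) (Gf N w t) t :=
  ((cont_Gf w).integral_hasStrictDerivAt 0 t).hasDerivAt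

lemma cont_F1 (w : ℕ → E) : Continuous (fun s => ∫ u in (0:ℝ)..s, Gf N w u) :=
  Differentiable.continuous (fun s => (hF1 (N := N) w s).differentiableAt)

lemma hXd (w : ℕ → E) (x0 v0 : E) (t : ℝ) :
    HasDerivAt (Xf N w x0 v0) (v0 + ∫ u in (0:ℝ)..t, Gf N w u) t := by
  have h1 : HasDerivAt (fun t : ℝ => x0 + t • v0) v0 t := by
    simpa using ((hasDerivAt_id t).smul_const v0).const_add x0
  have h2 : HasDerivAt (fun s : ℝ => ∫ s' in (0:ℝ)..s, (∫ u in (0:ℝ)..s', Gf N w u))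
      (∫ u in (0:ℝ)..t, Gf N w u) t :=
    ((cont_F1 w).integral_hasStrictDerivAt 0 t).hasDerivAt
  exact h1.add h2

lemma Xf_deriv (w : ℕ → E) (x0 v0 : E) :
    deriv (Xf N w x0 v0) = fun t => v0 + ∫ u in (0:ℝ)..t, Gf N w u :=
  funext fun t => (hXd w x0 v0 t).deriv

lemma Xf_deriv2 (w : ℕ → E) (x0 v0 : E) :
    deriv (deriv (Xf N w x0 v0)) = Gf N w := by
  rw [Xf_deriv]
  exact funext fun t => (((hF1 w t).const_add v0)).deriv

lemma Xf_contDiff (w : ℕ → E) (x0 v0 : E) : ContDiff ℝ 2 (Xf N w x0 v0) := by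
  have h2 : (2 : WithTop ℕ∞) = (1 : WithTop ℕ∞) + 1 := by norm_num
  rw [h2, contDiff_succ_iff_deriv]
  refine ⟨fun t => (hXd w x0 v0 t).differentiableAt, by simp, ?_⟩
  rw [Xf_deriv, contDiff_one_iff_deriv]
  constructor
  · exact fun t => ((hF1 w t).const_add v0).differentiableAt
  · have : deriv (fun t => v0 + ∫ u in (0:ℝ)..t, Gf N w u) = Gf N w :=
      funext fun t => ((hF1 w t).const_add v0).deriv
    rw [this]
    exact cont_Gf w

lemma uIcc_eq (k : ℕ) : Set.uIcc (k:ℝ) ((k:ℝ)+1) = Set.Icc (k:ℝ) ((k:ℝ)+1) :=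
  Set.uIcc_of_le (by linarith)

lemma hPd (w : ℕ → E) (k : ℕ) (t : ℝ) :
    HasDerivAt (fun t : ℝ => (t - k) • w k + ((t-k)^2/2) • (w (k+1) - w k))
      (w k + (t - k) • (w (k+1) - w k)) t := by
  have h1 : HasDerivAt (fun t : ℝ => (t - k) • w k) (w k) t := by
    simpa using ((hasDerivAt_id t).sub_const (k:ℝ)).smul_const (w k)
  have hq : HasDerivAt (fun t : ℝ => (t-k)^2/2) (t-k) t := by
    have := (((hasDerivAt_id t).sub_const (k:ℝ)).pow 2).div_const 2
    simpa using this
  exact h1.add (hq.smul_const _)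

lemma int_Gf {w : ℕ → E} {k : ℕ} (hk : k < N) :
    ∫ t in (k:ℝ)..((k:ℝ)+1), Gf N w t = (2:ℝ)⁻¹ • (w k + w (k+1)) := by
  rw [intervalIntegral.integral_eq_sub_of_hasDerivAt
    (f := fun t : ℝ => (t - k) • w k + ((t-k)^2/2) • (w (k+1) - w k))
    (fun t ht => by
      rw [Gf_on hk (by rwa [uIcc_eq] at ht)]
      exact hPd w k t)
    ((cont_Gf w).intervalIntegrable _ _)]
  simp only [add_sub_cancel_left, sub_self, zero_smul, add_zero, zero_pow, zero_div,
    one_smul, one_pow]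
  norm_num
  module

lemma F1_eq {w : ℕ → E} {k : ℕ} (hk : k < N) {s : ℝ}
    (hs : s ∈ Set.Icc (k:ℝ) ((k:ℝ)+1)) :
    (∫ u in (0:ℝ)..s, Gf N w u) = (∫ u in (0:ℝ)..(k:ℝ), Gf N w u)
      + ((s - k) • w k + ((s-k)^2/2) • (w (k+1) - w k)) := by
  have hadd : (∫ u in (0:ℝ)..(k:ℝ), Gf N w u) + (∫ u in (k:ℝ)..s, Gf N w u)
      = ∫ u in (0:ℝ)..s, Gf N w u :=
    intervalIntegral.integral_add_adjacent_intervals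
      ((cont_Gf w).intervalIntegrable _ _) ((cont_Gf w).intervalIntegrable _ _)
  have hks : ∫ u in (k:ℝ)..s, Gf N w u
      = ((s - k) • w k + ((s-k)^2/2) • (w (k+1) - w k)) := by
    rw [intervalIntegral.integral_eq_sub_of_hasDerivAt
      (f := fun t : ℝ => (t - k) • w k + ((t-k)^2/2) • (w (k+1) - w k))
      (fun t ht => by
        have ht' : t ∈ Set.Icc (k:ℝ) ((k:ℝ)+1) := by
          have hsub : Set.uIcc (k:ℝ) s ⊆ Set.Icc (k:ℝ) ((k:ℝ)+1) := by
            rw [Set.uIcc_of_le hs.1]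
            exact Set.Icc_subset_Icc le_rfl hs.2
          exact hsub ht
        rw [Gf_on hk ht']
        exact hPd w k t)
      ((cont_Gf w).intervalIntegrable _ _)]
    simp
  rw [← hadd, hks]

lemma int_F1 {w : ℕ → E} {k : ℕ} (hk : k < N) :
    ∫ s in (k:ℝ)..((k:ℝ)+1), (∫ u in (0:ℝ)..s, Gf N w u)
      = (∫ u in (0:ℝ)..(k:ℝ), Gf N w u) + (3:ℝ)⁻¹ • w k + (6:ℝ)⁻¹ • w (k+1) := by
  rw [intervalIntegral.integral_congr (g := fun s =>
    (∫ u in (0:ℝ)..(k:ℝ), Gf N w u) + ((s - k) • w k + ((s-k)^2/2) • (w (k+1) - w k)))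
    (fun s hs => F1_eq hk (by rwa [uIcc_eq] at hs))]
  have hP2 : ∀ t : ℝ, HasDerivAt (fun t : ℝ =>
      t • (∫ u in (0:ℝ)..(k:ℝ), Gf N w u)
      + (((t-k)^2/2) • w k + ((t-k)^3/6) • (w (k+1) - w k)))
      ((∫ u in (0:ℝ)..(k:ℝ), Gf N w u)
        + ((t - k) • w k + ((t-k)^2/2) • (w (k+1) - w k))) t := by
    intro t
    have h0 : HasDerivAt (fun t : ℝ => t • (∫ u in (0:ℝ)..(k:ℝ), Gf N w u))
        (∫ u in (0:ℝ)..(k:ℝ), Gf N w u) t := by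
      simpa using (hasDerivAt_id t).smul_const (∫ u in (0:ℝ)..(k:ℝ), Gf N w u)
    have h1 : HasDerivAt (fun t : ℝ => ((t-k)^2/2) • w k) ((t - k) • w k) t := by
      have hq : HasDerivAt (fun t : ℝ => (t-k)^2/2) (t-k) t := by
        simpa using (((hasDerivAt_id t).sub_const (k:ℝ)).pow 2).div_const 2
      exact hq.smul_const _
    have h2 : HasDerivAt (fun t : ℝ => ((t-k)^3/6) • (w (k+1) - w k))
        (((t-k)^2/2) • (w (k+1) - w k)) t := by
      have hq : HasDerivAt (fun t : ℝ => (t-k)^3/6) ((t-k)^2/2) t := by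
        have := (((hasDerivAt_id t).sub_const (k:ℝ)).pow 3).div_const 6
        refine this.congr_deriv ?_
        simp only [id_eq]
        ring
      exact hq.smul_const _
    exact h0.add (h1.add h2)
  rw [intervalIntegral.integral_eq_sub_of_hasDerivAt (fun t _ => hP2 t)
    (by
      apply Continuous.intervalIntegrable
      fun_prop)]
  simp only [add_sub_cancel_left, sub_self, zero_smul, add_zero, zero_pow, zero_div,
    one_pow, one_smul]
  norm_num
  module

lemma int_normsq_Gf {w : ℕ → E} {k : ℕ} (hk : k < N) :
    ∫ t in (k:ℝ)..((k:ℝ)+1), ‖Gf N w t‖^2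
      = ‖w k‖^2 + (inner ℝ (w k) (w (k+1) - w k) : ℝ) + ‖w (k+1) - w k‖^2/3 := by
  set dd := w (k+1) - w k with hdd
  have hψ : ∀ t ∈ Set.uIcc (k:ℝ) ((k:ℝ)+1), HasDerivAt
      (fun t => (t-(k:ℝ))*‖w k‖^2 + (t-k)^2*(inner ℝ (w k) dd : ℝ) + (t-k)^3*(‖dd‖^2/3))
      (‖Gf N w t‖^2) t := by
    intro t ht
    have hid : HasDerivAt (fun t : ℝ => t - k) 1 t := (hasDerivAt_id t).sub_const _
    have h1 : HasDerivAt (fun t : ℝ => (t-(k:ℝ))*‖w k‖^2) (‖w k‖^2) t := by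
      simpa using hid.mul_const (‖w k‖^2)
    have h2 : HasDerivAt (fun t : ℝ => (t-(k:ℝ))^2*(inner ℝ (w k) dd : ℝ))
        (2*(t-k)*(inner ℝ (w k) dd : ℝ)) t := by
      simpa [mul_comm] using (hid.pow 2).mul_const (inner ℝ (w k) dd : ℝ)
    have h3 : HasDerivAt (fun t : ℝ => (t-(k:ℝ))^3*(‖dd‖^2/3)) (3*(t-k)^2*(‖dd‖^2/3)) t := by
      simpa [mul_comm] using (hid.pow 3).mul_const (‖dd‖^2/3)
    have h := (h1.add h2).add h3
    refine h.congr_deriv ?_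
    rw [Gf_on hk (by rwa [uIcc_eq] at ht), ← hdd]
    rw [norm_add_sq_real, inner_smul_right, norm_smul]
    simp only [mul_pow, sq_abs, Real.norm_eq_abs]
    ring
  rw [intervalIntegral.integral_eq_sub_of_hasDerivAt hψ
    (((cont_Gf w).norm.pow 2).intervalIntegrable _ _)]
  ring

end Xf

def fc (N : ℕ) (i : ℕ) : Fin (N+1) := ⟨min i N, by omega⟩

lemma fc_castSucc {i : Fin N} : fc N (i:ℕ) = i.castSucc := by
  have := i.isLt
  apply Fin.ext
  simp [fc]
  try omega

lemma fc_succ {i : Fin N} : fc N ((i:ℕ)+1) = i.succ := by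
  have := i.isLt
  apply Fin.ext
  simp [fc]
  try omega

lemma foc_consec (hN : N ≠ 0) (x : Fin (N+1) → E) (i₀ i₁ : Fin N)
    (h01 : i₁.castSucc = i₀.succ) :
    AA (x i₁.castSucc) (x i₁.succ) (Vopt hN x i₁.castSucc) (Vopt hN x i₁.succ)
      = BB (x i₀.castSucc) (x i₀.succ) (Vopt hN x i₀.castSucc) (Vopt hN x i₀.succ) := by
  set v := Vopt hN x with hv
  have h0 := gd_Vopt hN x i₀.succ
  rw [gd, Finset.sum_add_distrib] at h0
  have e1 : (∑ i : Fin N, if i₀.succ = i.castSucc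
      then PP (x i.castSucc) (x i.succ) (v i.castSucc) (v i.succ) else 0)
      = PP (x i₁.castSucc) (x i₁.succ) (v i₁.castSucc) (v i₁.succ) := by
    rw [Finset.sum_eq_single i₁]
    · rw [if_pos h01.symm]
    · intro b _ hb
      rw [if_neg]
      intro hc
      exact hb (Fin.castSucc_injective _ (h01.trans hc)).symm
    · intro h; exact absurd (Finset.mem_univ i₁) h
  have e2 : (∑ i : Fin N, if i₀.succ = i.succ
      then RR (x i.castSucc) (x i.succ) (v i.castSucc) (v i.succ) else 0)
      = RR (x i₀.castSucc) (x i₀.succ) (v i₀.castSucc) (v i₀.succ) := by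
    rw [Finset.sum_eq_single i₀]
    · rw [if_pos rfl]
    · intro b _ hb
      rw [if_neg]
      intro hc
      exact hb (Fin.succ_injective _ hc).symm
    · intro h; exact absurd (Finset.mem_univ i₀) h
  rw [e1, e2, PP_eq, RR_eq] at h0
  have h2 : (2:ℝ) • (BB (x i₀.castSucc) (x i₀.succ) (v i₀.castSucc) (v i₀.succ)
      - AA (x i₁.castSucc) (x i₁.succ) (v i₁.castSucc) (v i₁.succ)) = 0 := by
    rw [← h0]; module
  rcases smul_eq_zero.mp h2 with h | h
  · norm_num at h
  · exact (sub_eq_zero.mp h).symm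

lemma construction (hN : N ≠ 0) (x : Fin (N+1) → E) :
    ∃ X : ℝ → E, ContDiff ℝ 2 X ∧ (∀ i : Fin (N+1), X ((i:ℕ):ℝ) = x i) ∧
      (∫ t in (0:ℝ)..(N:ℝ), ‖deriv (deriv X) t‖^2) = SS N x (Vopt hN x) := by
  set v := Vopt hN x with hvdef
  set An : ℕ → E := fun i =>
    AA (x (fc N i)) (x (fc N (i+1))) (v (fc N i)) (v (fc N (i+1))) with hAn
  set Bn : ℕ → E := fun i =>
    BB (x (fc N i)) (x (fc N (i+1))) (v (fc N i)) (v (fc N (i+1))) with hBn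
  set w : ℕ → E := fun i => if i < N then An i else Bn (N-1) with hw
  have hwA : ∀ k, k < N → w k = An k := fun k hk => by simp [hw, hk]
  have hwB : ∀ k, k < N → w (k+1) = Bn k := by
    intro k hk
    by_cases h : k + 1 < N
    · rw [hwA _ h]
      have h01 : (⟨k+1, h⟩ : Fin N).castSucc = (⟨k, hk⟩ : Fin N).succ := by
        apply Fin.ext; simp
      have hfoc := foc_consec hN x ⟨k, hk⟩ ⟨k+1, h⟩ h01
      have f1 : fc N (k+1) = (⟨k+1, h⟩ : Fin N).castSucc := by
        apply Fin.ext; simp [fc]; try omega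
      have f2 : fc N (k+1+1) = (⟨k+1, h⟩ : Fin N).succ := by
        apply Fin.ext; simp [fc]; try omega
      have f3 : fc N k = (⟨k, hk⟩ : Fin N).castSucc := by
        apply Fin.ext; simp [fc]; try omega
      show An (k+1) = Bn k
      simp only [hAn, hBn]
      rw [f2, f1, f3]
      rw [← h01] at hfoc
      rw [hvdef]
      exact hfoc
    · have hk1 : ¬ (k+1 < N) := h
      have hNk : N - 1 = k := by omega
      rw [hw]
      simp only [hk1, if_false]
      rw [hNk]
  have hinterp : ∀ k : ℕ, k ≤ N →
      Xf N w (x 0) (v 0) (k:ℝ) = x (fc N k) ∧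
      (v 0 + ∫ u in (0:ℝ)..(k:ℝ), Gf N w u) = v (fc N k) := by
    intro k
    induction k with
    | zero =>
      intro _
      have hfc0 : fc N 0 = 0 := by apply Fin.ext; simp [fc]
      constructor
      · simp [Xf, hfc0]
      · simp [hfc0]
    | succ k ih =>
      intro hk1
      have hkN : k < N := by omega
      obtain ⟨ihx, ihv⟩ := ih (by omega)
      have hcast : ((k+1:ℕ):ℝ) = (k:ℝ)+1 := by push_cast; ring
      have hsplitG : (∫ u in (0:ℝ)..((k:ℝ)+1), Gf N w u)
          = (∫ u in (0:ℝ)..(k:ℝ), Gf N w u) + ∫ u in (k:ℝ)..((k:ℝ)+1), Gf N w u :=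
        (intervalIntegral.integral_add_adjacent_intervals
          ((cont_Gf w).intervalIntegrable _ _) ((cont_Gf w).intervalIntegrable _ _)).symm
      have hABv : (2:ℝ)⁻¹ • (An k + Bn k) = v (fc N (k+1)) - v (fc N k) := by
        simp only [hAn, hBn]
        rw [I5a]
        module
      have hvel : (v 0 + ∫ u in (0:ℝ)..((k:ℝ)+1), Gf N w u) = v (fc N (k+1)) := by
        rw [hsplitG, int_Gf hkN, hwA k hkN, hwB k hkN]
        linear_combination (norm := module) ihv + hABv
      refine ⟨?_, by rw [hcast]; exact hvel⟩
      rw [hcast]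
      have hsplitF : (∫ s in (0:ℝ)..((k:ℝ)+1), ∫ u in (0:ℝ)..s, Gf N w u)
          = (∫ s in (0:ℝ)..(k:ℝ), ∫ u in (0:ℝ)..s, Gf N w u)
            + ∫ s in (k:ℝ)..((k:ℝ)+1), ∫ u in (0:ℝ)..s, Gf N w u :=
        (intervalIntegral.integral_add_adjacent_intervals
          ((cont_F1 w).intervalIntegrable _ _) ((cont_F1 w).intervalIntegrable _ _)).symm
      have hxk : x 0 + (k:ℝ) • v 0 + (∫ s in (0:ℝ)..(k:ℝ), ∫ u in (0:ℝ)..s, Gf N w u)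
          = x (fc N k) := ihx
      have hAB : (3:ℝ)⁻¹ • An k + (6:ℝ)⁻¹ • Bn k
          = x (fc N (k+1)) - x (fc N k) - v (fc N k) := by
        simp only [hAn, hBn]
        exact I5b _ _ _ _
      show x 0 + ((k:ℝ)+1) • v 0 + (∫ s in (0:ℝ)..((k:ℝ)+1), ∫ u in (0:ℝ)..s, Gf N w u)
          = x (fc N (k+1))
      rw [hsplitF, int_F1 hkN, hwA k hkN, hwB k hkN]
      linear_combination (norm := module) hxk + ihv + hAB
  refine ⟨Xf N w (x 0) (v 0), Xf_contDiff w _ _, ?_, ?_⟩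
  · intro i
    have hi : (i:ℕ) ≤ N := Nat.lt_succ_iff.mp i.isLt
    have hfi : fc N (i:ℕ) = i := by apply Fin.ext; simp [fc]; omega
    have h := (hinterp (i:ℕ) hi).1
    rwa [hfi] at h
  · rw [Xf_deriv2]
    have hsum := intervalIntegral.sum_integral_adjacent_intervals (μ := volume)
      (f := fun t => ‖Gf N w t‖^2) (a := fun k : ℕ => (k:ℝ)) (n := N)
      (fun k _ => ((cont_Gf (N := N) w).norm.pow 2).intervalIntegrable _ _)
    push_cast at hsum
    rw [← hsum]
    calc ∑ k ∈ Finset.range N, ∫ t in (k:ℝ)..((k:ℝ)+1), ‖Gf N w t‖^2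
        = ∑ k ∈ Finset.range N, splineCost (x (fc N k)) (x (fc N (k+1)))
            (v (fc N k)) (v (fc N (k+1))) := by
          refine Finset.sum_congr rfl fun k hk => ?_
          have hkN : k < N := Finset.mem_range.mp hk
          rw [int_normsq_Gf hkN, hwA k hkN, hwB k hkN]
          simp only [hAn, hBn]
          exact I3 _ _ _ _
      _ = SS N x v := by
          rw [← Fin.sum_univ_eq_sum_range (fun k => splineCost (x (fc N k)) (x (fc N (k+1)))
            (v (fc N k)) (v (fc N (k+1)))) N, SS]
          exact Finset.sum_congr rfl fun i _ => by rw [fc_castSucc, fc_succ]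

/-- The value of the discrete problem. -/
def Fc (hN : N ≠ 0) (x : Fin (N+1) → E) : ℝ := SS N x (Vopt hN x)

lemma cont_Fc (hN : N ≠ 0) : Continuous (Fc (d := d) hN) := by
  unfold Fc
  have h1 : Continuous fun x : Fin (N+1) → E =>
      ((x, Vopt hN x) : (Fin (N+1) → E) × (Fin (N+1) → E)) :=
    continuous_id.prodMk (cont_Vopt hN)
  have h2 := Continuous.comp (cont_SS (d := d) (N := N)) h1
  exact h2

lemma mc_eq (hN : N ≠ 0) (x : Fin (N+1) → E) : multiCost N x = Fc hN x := by
  obtain ⟨X, hX, hint, hE⟩ := construction hN x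
  have hmem : Fc hN x ∈ { y : ℝ | ∃ X : ℝ → E, ContDiff ℝ 2 X ∧
      (∀ i : Fin (N + 1), X ((i : ℕ) : ℝ) = x i) ∧
      y = ∫ t in (0:ℝ)..(N:ℝ), ‖deriv (deriv X) t‖ ^ 2 } := ⟨X, hX, hint, hE.symm⟩
  apply le_antisymm
  · apply csInf_le
    · refine ⟨0, fun y hy => ?_⟩
      obtain ⟨X', hX', hint', rfl⟩ := hy
      exact intervalIntegral.integral_nonneg (Nat.cast_nonneg N) (fun t _ => by positivity)
    · exact hmem
  · refine le_csInf ⟨_, hmem⟩ ?_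
    rintro y ⟨X', hX', hint', rfl⟩
    exact lb_total hN x hX' hint'

end SplineProof

open SplineProof

/-- If `γ̂` minimizes the phase-space multimarginal problem over `Γ(ρ₀,…,ρ_N)`, then its
position marginal `π̂ = (X₀,…,X_N)_#γ̂` minimizes `∫ 𝒞 dπ` over `Π(ρ₀,…,ρ_N)`. -/
theorem stmt10 (d N : ℕ) (hd : 1 ≤ d) (hN : 1 ≤ N)
    (ρ : Fin (N + 1) → Measure (EuclideanSpace ℝ (Fin d)))
    (hprob : ∀ i, IsProbabilityMeasure (ρ i))
    (hmom : ∀ i, (∫⁻ z, ENNReal.ofReal (‖z‖ ^ 2) ∂(ρ i)) < ⊤)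
    (γ : Measure ((Fin (N + 1) → EuclideanSpace ℝ (Fin d)) ×
        (Fin (N + 1) → EuclideanSpace ℝ (Fin d))))
    (hγ : IsProbabilityMeasure γ) (hγm : ∀ i, γ.map (fun p => p.1 i) = ρ i)
    (hopt : ∀ γ' : Measure ((Fin (N + 1) → EuclideanSpace ℝ (Fin d)) ×
        (Fin (N + 1) → EuclideanSpace ℝ (Fin d))),
      IsProbabilityMeasure γ' → (∀ i, γ'.map (fun p => p.1 i) = ρ i) →
      (∫⁻ p, ENNReal.ofReal (∑ i : Fin N,
          splineCost (p.1 i.castSucc) (p.1 i.succ) (p.2 i.castSucc) (p.2 i.succ)) ∂γ) ≤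
        ∫⁻ p, ENNReal.ofReal (∑ i : Fin N,
          splineCost (p.1 i.castSucc) (p.1 i.succ) (p.2 i.castSucc) (p.2 i.succ)) ∂γ') :
    ∀ π' : Measure (Fin (N + 1) → EuclideanSpace ℝ (Fin d)),
      IsProbabilityMeasure π' → (∀ i, π'.map (fun y => y i) = ρ i) →
      (∫⁻ y, ENNReal.ofReal (multiCost N y) ∂(γ.map Prod.fst)) ≤
        ∫⁻ y, ENNReal.ofReal (multiCost N y) ∂π' := by
  intro π' hπ' hπ'm
  have hN0 : N ≠ 0 := by omega
  have hVcont := cont_Vopt (d := d) (N := N) hN0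
  have hFcont : Continuous (Fc (d := d) hN0) := cont_Fc hN0
  have hFm : Measurable fun y => ENNReal.ofReal (Fc (d := d) hN0 y) :=
    ENNReal.measurable_ofReal.comp hFcont.measurable
  have hTmeas : Measurable fun y : Fin (N+1) → EuclideanSpace ℝ (Fin d) =>
      (y, Vopt hN0 y) := measurable_id.prodMk hVcont.measurable
  have hSm : Measurable fun p : (Fin (N+1) → EuclideanSpace ℝ (Fin d)) ×
      (Fin (N+1) → EuclideanSpace ℝ (Fin d)) => ENNReal.ofReal (SS N p.1 p.2) :=
    ENNReal.measurable_ofReal.comp cont_SS.measurable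
  have hγ'prob : IsProbabilityMeasure (π'.map (fun y => (y, Vopt hN0 y))) :=
    Measure.isProbabilityMeasure_map hTmeas.aemeasurable
  have hγ'm : ∀ i, (π'.map (fun y => (y, Vopt hN0 y))).map (fun p => p.1 i) = ρ i := by
    intro i
    rw [Measure.map_map (show Measurable fun p : (Fin (N+1) → EuclideanSpace ℝ (Fin d)) ×
      (Fin (N+1) → EuclideanSpace ℝ (Fin d)) => p.1 i from
      (measurable_pi_apply i).comp measurable_fst) hTmeas]
    exact hπ'm i
  have hopt' := hopt _ hγ'prob hγ'm
  simp only [mc_eq hN0]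
  rw [lintegral_map hFm measurable_fst]
  calc ∫⁻ p, ENNReal.ofReal (Fc hN0 p.1) ∂γ
      ≤ ∫⁻ p, ENNReal.ofReal (SS N p.1 p.2) ∂γ :=
        lintegral_mono fun p => ENNReal.ofReal_le_ofReal (SS_min hN0 p.1 p.2)
    _ ≤ ∫⁻ p, ENNReal.ofReal (SS N p.1 p.2) ∂(π'.map (fun y => (y, Vopt hN0 y))) := hopt'
    _ = ∫⁻ y, ENNReal.ofReal (Fc hN0 y) ∂π' := by
        rw [lintegral_map hSm hTmeas]
        rfl
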